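/- arXiv:2311.07610 — 2 statements merged into one kernel-verified Lean document; each statement's English description precedes it below -/
import Mathlib

section
/- For every positive integer n, ∑_{k=0}^{⌊n/2⌋} (-1)^{n-k}·(n/(n-k))·C(n-k, k)·L_{n-2k} equals 4 if n ≡ 0 (mod 5), and equals -1 otherwise. -/
open Finset Real

/-- Fibonacci numbers extended to integer indices. -/
def fibZ (n : ℤ) : ℤ :=
  if 0 ≤ n then (Nat.fib n.toNat : ℤ)
  else (-1) ^ ((-n).toNat + 1) * (Nat.fib (-n).toNat : ℤ)

/-- Lucas numbers on natural indices. -/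
def lucasNat : ℕ → ℤ
  | 0 => 2
  | 1 => 1
  | n + 2 => lucasNat (n + 1) + lucasNat n

/-- Lucas numbers extended to integer indices. -/
def lucasZ (n : ℤ) : ℤ :=
  if 0 ≤ n then lucasNat n.toNat
  else (-1) ^ (-n).toNat * lucasNat (-n).toNat

noncomputable def gold : ℝ := (1 + Real.sqrt 5) / 2
noncomputable def gold' : ℝ := (1 - Real.sqrt 5) / 2


/-- coefficient n/(n-k) * C(n-k,k) as a natural number -/
def dd (n k : ℕ) : ℕ :=
  if k = 0 then 1 else Nat.choose (n - k) k + Nat.choose (n - k - 1) (k - 1)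

/-- Dickson polynomial D_n(x,1) -/
noncomputable def Dk : ℕ → ℝ → ℝ
  | 0, _ => 2
  | 1, x => x
  | (n+2), x => x * Dk (n+1) x - Dk n x

lemma dd_pascal (a k : ℕ) (hk : 1 ≤ k) (h2 : 2 * k ≤ a + 2) :
    dd (a+2) k = dd (a+1) k + dd a (k-1) := by
  match k with
  | 1 =>
    have e1 : a + 2 - 1 = a + 1 := by omega
    have e2 : a + 2 - 1 - 1 = a := by omega
    have e3 : a + 1 - 1 = a := by omega
    simp only [dd, if_neg (by omega : ¬ (1:ℕ) = 0), if_pos rfl, e1, e2, e3]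
    simp [Nat.choose]
    omega
  | (j+2) =>
    obtain ⟨b, rfl⟩ : ∃ b, a = b + (2*j+2) := ⟨a - (2*j+2), by omega⟩
    have h1 : dd (b + (2*j+2) + 2) (j+2)
        = Nat.choose (b+j+2) (j+2) + Nat.choose (b+j+1) (j+1) := by
      rw [dd, if_neg (by omega : ¬ j+2 = 0)]
      congr 2 <;> omega
    have h2 : dd (b + (2*j+2) + 1) (j+2)
        = Nat.choose (b+j+1) (j+2) + Nat.choose (b+j) (j+1) := by
      rw [dd, if_neg (by omega : ¬ j+2 = 0)]
      congr 2 <;> omega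
    have h3 : dd (b + (2*j+2)) (j+2-1)
        = Nat.choose (b+j+1) (j+1) + Nat.choose (b+j) j := by
      rw [dd, if_neg (by omega : ¬ j+2-1 = 0)]
      congr 2 <;> omega
    rw [h1, h2, h3, Nat.choose_succ_succ (b+j+1) (j+1), Nat.choose_succ_succ (b+j) j]
    ring
lemma dd_zero_of_big (n k : ℕ) (hk : 2 ≤ k) (h : n < 2 * k) : dd n k = 0 := by
  rw [dd, if_neg (by omega : ¬ k = 0),
    Nat.choose_eq_zero_of_lt (by omega), Nat.choose_eq_zero_of_lt (by omega)]

lemma Dk_formula (x : ℝ) : ∀ n, 1 ≤ n →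
    Dk n x = ∑ k ∈ range (n/2+1), (-1:ℝ)^k * (dd n k : ℝ) * x^(n - 2*k) := by
  intro n
  induction n using Nat.strong_induction_on with
  | _ n ih =>
    match n with
    | 0 => intro h; exact absurd h (by omega)
    | 1 => intro _; simp [Dk, dd]
    | 2 =>
      intro _
      show Dk (0+2) x = _
      rw [Dk]
      simp [Dk, dd, Finset.sum_range_succ, Nat.choose]
      ring
    | (m+3) =>
      intro _
      have ih1 := ih (m+1) (by omega) (by omega)
      have ih2 := ih (m+2) (by omega) (by omega)
      have h1 : Dk (m+3) x
          = x * ∑ k ∈ range ((m+2)/2+1), (-1:ℝ)^k * (dd (m+2) k : ℝ) * x^(m+2 - 2*k)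
            - ∑ k ∈ range ((m+1)/2+1), (-1:ℝ)^k * (dd (m+1) k : ℝ) * x^(m+1 - 2*k) := by
        show Dk ((m+1)+2) x = _
        rw [Dk, ih1, ih2]
      have h2 : x * ∑ k ∈ range ((m+2)/2+1), (-1:ℝ)^k * (dd (m+2) k : ℝ) * x^(m+2 - 2*k)
          = ∑ k ∈ range ((m+2)/2+1), (-1:ℝ)^k * (dd (m+2) k : ℝ) * x^(m+3 - 2*k) := by
        rw [Finset.mul_sum]
        apply Finset.sum_congr rfl
        intro k hk
        simp only [Finset.mem_range] at hk
        have : m + 3 - 2*k = (m + 2 - 2*k) + 1 := by omega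
        rw [this, pow_succ]
        ring
      have h3 : ∑ k ∈ range ((m+2)/2+1), (-1:ℝ)^k * (dd (m+2) k : ℝ) * x^(m+3 - 2*k)
          = ∑ k ∈ range ((m+1)/2+2), (-1:ℝ)^k * (dd (m+2) k : ℝ) * x^(m+3 - 2*k) := by
        apply Finset.sum_subset (Finset.range_subset_range.2 (by omega))
        intro k hk hnk
        simp only [Finset.mem_range] at hk hnk
        rw [dd_zero_of_big (m+2) k (by omega) (by omega)]
        simp
      have h5 : ∑ k ∈ range ((m+1)/2+1+1), (-1:ℝ)^k * (dd (m+3) k : ℝ) * x^(m+3 - 2*k)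
          = (∑ i ∈ range ((m+1)/2+1), (-1:ℝ)^(i+1) * (dd (m+3) (i+1) : ℝ) * x^(m+3 - 2*(i+1)))
            + (-1:ℝ)^0 * (dd (m+3) 0 : ℝ) * x^(m+3 - 2*0) :=
        Finset.sum_range_succ' _ _
      have h6 : ∑ k ∈ range ((m+1)/2+1+1), (-1:ℝ)^k * (dd (m+2) k : ℝ) * x^(m+3 - 2*k)
          = (∑ i ∈ range ((m+1)/2+1), (-1:ℝ)^(i+1) * (dd (m+2) (i+1) : ℝ) * x^(m+3 - 2*(i+1)))
            + (-1:ℝ)^0 * (dd (m+2) 0 : ℝ) * x^(m+3 - 2*0) :=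
        Finset.sum_range_succ' _ _
      have h7 : ∑ i ∈ range ((m+1)/2+1), (-1:ℝ)^(i+1) * (dd (m+3) (i+1) : ℝ) * x^(m+3 - 2*(i+1))
          = ∑ i ∈ range ((m+1)/2+1),
              ((-1:ℝ)^(i+1) * (dd (m+2) (i+1) : ℝ) * x^(m+3 - 2*(i+1))
                - (-1:ℝ)^i * (dd (m+1) i : ℝ) * x^(m+1 - 2*i)) := by
        apply Finset.sum_congr rfl
        intro i hi
        simp only [Finset.mem_range] at hi
        have hp : dd ((m+1)+2) (i+1) = dd ((m+1)+1) (i+1) + dd (m+1) (i+1-1) :=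
          dd_pascal (m+1) (i+1) (by omega) (by omega)
        simp only [Nat.add_sub_cancel] at hp
        have he : m + 3 - 2*(i+1) = m + 1 - 2*i := by omega
        have hc : ((dd (m+3) (i+1) : ℕ) : ℝ) = (dd (m+2) (i+1) : ℝ) + (dd (m+1) i : ℝ) := by
          exact_mod_cast congrArg (Nat.cast : ℕ → ℝ) hp
        rw [he, hc, pow_succ]
        ring
      have hr : (m+3)/2 + 1 = (m+1)/2+1+1 := by omega
      have hr2 : (m+1)/2+2 = (m+1)/2+1+1 := by omega
      rw [hr, h1, h2, h3, hr2, h5, h6, h7, Finset.sum_sub_distrib]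
      have hdd0 : dd (m+3) 0 = dd (m+2) 0 := rfl
      rw [hdd0]
      ring

lemma sqrt5_sq : Real.sqrt 5 * Real.sqrt 5 = 5 :=
  Real.mul_self_sqrt (by norm_num)

lemma goldSq : gold ^ 2 = gold + 1 := by
  rw [gold]; rw [pow_two]; field_simp; nlinarith [sqrt5_sq]

lemma goldSq2 : gold' ^ 2 = gold' + 1 := by
  rw [gold']; rw [pow_two]; field_simp; nlinarith [sqrt5_sq]

lemma goldAdd : gold + gold' = 1 := by rw [gold, gold']; ring

lemma lucas_golden : ∀ m : ℕ, (lucasNat m : ℝ) = gold ^ m + gold' ^ m := by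
  intro m
  induction m using Nat.strong_induction_on with
  | _ m ih =>
    match m with
    | 0 => norm_num [lucasNat]
    | 1 => simp [lucasNat, goldAdd]
    | (k+2) =>
      have i1 := ih (k+1) (by omega)
      have i0 := ih k (by omega)
      show ((lucasNat (k+1) + lucasNat k : ℤ) : ℝ) = _
      push_cast
      rw [i1, i0]
      have e1 : gold ^ (k+2) = gold ^ k * gold ^ 2 := by ring
      have e2 : gold' ^ (k+2) = gold' ^ k * gold' ^ 2 := by ring
      rw [e1, e2, goldSq, goldSq2]
      ring

lemma Dk4 (x : ℝ) (hx : x ^ 2 = x + 1) (n : ℕ) :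
    Dk (n+4) x = Dk (n+3) x - Dk (n+2) x + Dk (n+1) x - Dk n x := by
  have r2 : Dk (n+2) x = x * Dk (n+1) x - Dk n x := rfl
  have r3 : Dk (n+3) x = x * Dk (n+2) x - Dk (n+1) x := rfl
  have r4 : Dk (n+4) x = x * Dk (n+3) x - Dk (n+2) x := rfl
  rw [r4, r3, r2]
  linear_combination (x * Dk (n+1) x - Dk n x) * hx

lemma w_val : ∀ n : ℕ, Dk n gold + Dk n gold'
    = (-1:ℝ)^n * (if n % 5 = 0 then (4:ℝ) else -1) := by
  intro n
  induction n using Nat.strong_induction_on with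
  | _ n ih =>
    match n with
    | 0 => norm_num [Dk]
    | 1 => norm_num [Dk, goldAdd]
    | 2 =>
      have r : ∀ y : ℝ, Dk 2 y = y * y - 2 := fun y => rfl
      rw [r, r]
      norm_num
      nlinarith [goldSq, goldSq2, goldAdd]
    | 3 =>
      have r : ∀ y : ℝ, Dk 3 y = y * (y * y - 2) - y := fun y => rfl
      rw [r, r]
      norm_num
      nlinarith [goldSq, goldSq2, goldAdd]
    | (m+4) =>
      have i0 := ih m (by omega)
      have i1 := ih (m+1) (by omega)
      have i2 := ih (m+2) (by omega)
      have i3 := ih (m+3) (by omega)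
      rw [Dk4 gold goldSq m, Dk4 gold' goldSq2 m]
      have p1 : (-1:ℝ)^(m+1) = (-1)^m * (-1) := by rw [pow_succ]
      have p2 : (-1:ℝ)^(m+2) = (-1)^m := by rw [pow_add]; norm_num
      have p3 : (-1:ℝ)^(m+3) = (-1)^m * (-1) := by rw [pow_add]; norm_num
      have p4 : (-1:ℝ)^(m+4) = (-1)^m := by rw [pow_add]; norm_num
      have tfact : (-1:ℝ)^(m+3) * (if (m+3) % 5 = 0 then (4:ℝ) else -1)
          - (-1:ℝ)^(m+2) * (if (m+2) % 5 = 0 then (4:ℝ) else -1)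
          + (-1:ℝ)^(m+1) * (if (m+1) % 5 = 0 then (4:ℝ) else -1)
          - (-1:ℝ)^m * (if m % 5 = 0 then (4:ℝ) else -1)
          = (-1:ℝ)^(m+4) * (if (m+4) % 5 = 0 then (4:ℝ) else -1) := by
        rw [p1, p2, p3, p4]
        rcases (by omega : m % 5 = 0 ∨ m % 5 = 1 ∨ m % 5 = 2 ∨ m % 5 = 3 ∨ m % 5 = 4) with
          h|h|h|h|h <;>
        split_ifs <;> first | ring1 | (exfalso; omega)
      linarith [i0, i1, i2, i3, tfact]

lemma coeff_eq (n k : ℕ) (hn : 1 ≤ n) (hk : k ≤ n / 2) :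
    ((n:ℝ) / ((n:ℝ) - (k:ℝ))) * (Nat.choose (n-k) k : ℝ) = (dd n k : ℝ) := by
  rcases Nat.eq_zero_or_pos k with rfl | hpos
  · have hn0 : (n:ℝ) ≠ 0 := by exact_mod_cast (by omega : n ≠ 0)
    simp [dd, div_self hn0]
  · have hkn : k < n := by omega
    have h2k : 2 * k ≤ n := by omega
    have key : n * Nat.choose (n-k) k = (n - k) * dd n k := by
      rw [dd, if_neg (by omega : ¬ k = 0)]
      have h1 : (n - k) * Nat.choose (n-k-1) (k-1) = Nat.choose (n-k) k * k := by
        have h := Nat.add_one_mul_choose_eq (n-k-1) (k-1)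
        have e1 : n - k - 1 + 1 = n - k := by omega
        have e2 : k - 1 + 1 = k := by omega
        rwa [e1, e2] at h
      rw [Nat.mul_add, h1]
      have e3 : n = (n - k) + k := by omega
      calc (n:ℕ) * Nat.choose (n-k) k = ((n-k) + k) * Nat.choose (n-k) k := by rw [← e3]
        _ = (n-k) * Nat.choose (n-k) k + Nat.choose (n-k) k * k := by ring
    have hcast : ((n:ℝ) - (k:ℝ)) = ((n - k : ℕ) : ℝ) := by
      push_cast [Nat.cast_sub hkn.le]; ring
    have hne : ((n - k : ℕ) : ℝ) ≠ 0 := by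
      exact_mod_cast (by omega : (n - k : ℕ) ≠ 0)
    rw [hcast, div_mul_eq_mul_div, div_eq_iff hne]
    exact_mod_cast key.trans (Nat.mul_comm _ _)

theorem stmt11 (n : ℕ) (hn : 0 < n) :
    ∑ k ∈ Finset.range (n / 2 + 1),
        (-1 : ℝ) ^ (n - k) * ((n : ℝ) / ((n : ℝ) - (k : ℝ))) * (Nat.choose (n - k) k : ℝ) *
          (lucasZ ((n : ℤ) - 2 * k) : ℝ) =
      if n % 5 = 0 then 4 else -1 := by
  have key : ∀ k ∈ Finset.range (n/2+1),
      (-1 : ℝ) ^ (n - k) * ((n : ℝ) / ((n : ℝ) - (k : ℝ))) * (Nat.choose (n - k) k : ℝ) *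
          (lucasZ ((n : ℤ) - 2 * k) : ℝ)
      = (-1:ℝ)^n * ((-1:ℝ)^k * (dd n k : ℝ) * gold^(n-2*k))
        + (-1:ℝ)^n * ((-1:ℝ)^k * (dd n k : ℝ) * gold'^(n-2*k)) := by
    intro k hk
    simp only [Finset.mem_range] at hk
    have hk2 : k ≤ n / 2 := by omega
    have h2k : 2 * k ≤ n := by omega
    have hz : (lucasZ ((n:ℤ) - 2*k) : ℝ) = gold^(n-2*k) + gold'^(n-2*k) := by
      rw [lucasZ, if_pos (by omega : (0:ℤ) ≤ (n:ℤ) - 2*k)]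
      have e : ((n:ℤ) - 2*(k:ℤ)).toNat = n - 2*k := by omega
      rw [e, lucas_golden]
    have hs : (-1:ℝ)^(n-k) = (-1)^n * (-1)^k := by
      have h1 : (-1:ℝ)^n = (-1)^(n-k) * (-1)^k := by
        rw [← pow_add]; congr 1; omega
      have h2 : (-1:ℝ)^k * (-1)^k = 1 := by
        rw [← pow_add, ← two_mul, pow_mul]; norm_num
      rw [h1, mul_assoc, h2, mul_one]
    rw [hz, hs]
    have hc := coeff_eq n k hn hk2
    rw [mul_assoc ((-1:ℝ)^n * (-1)^k), hc]
    ring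
  rw [Finset.sum_congr rfl key, Finset.sum_add_distrib, ← Finset.mul_sum, ← Finset.mul_sum,
    ← Dk_formula gold n hn, ← Dk_formula gold' n hn]
  have hw := w_val n
  have hsq : (-1:ℝ)^n * (-1:ℝ)^n = 1 := by
    rw [← pow_add, ← two_mul, pow_mul]; norm_num
  linear_combination ((-1:ℝ)^n) * hw + (if n % 5 = 0 then (4:ℝ) else -1) * hsq
end

section
/- For every positive integer n and integer t, ∑_{k=0}^{n} (-1)^{n-k}·(n/(n+k))·C(n+k, n-k)·F_{2k+t} equals F_t if n ≡ 0 (mod 5); equals F_{t-1}/2 if n ≡ 1 or 4 (mod 5); and equals -F_{t+1}/2 if n ≡ 2 or 3 (mod 5). -/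
open Finset Real goldenRatio

def bb (n k : ℕ) : ℕ := (n+k).choose (2*k) + (n+k-1).choose (2*k)

lemma bb_zero {n k : ℕ} (h : n < k) : bb n k = 0 := by
  unfold bb
  rw [Nat.choose_eq_zero_of_lt (by omega), Nat.choose_eq_zero_of_lt (by omega)]

lemma pas (M K : ℕ) : (M+3).choose (K+2) + M.choose (K+2)
    = (M+2).choose (K+2) + (M+1).choose (K+2) + (M+1).choose K + M.choose K := by
  have h1 : (M+3).choose (K+2) = (M+2).choose (K+1) + (M+2).choose (K+2) :=
    Nat.choose_succ_succ _ _
  have h2 : (M+2).choose (K+1) = (M+1).choose K + (M+1).choose (K+1) :=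
    Nat.choose_succ_succ _ _
  have h3 : (M+1).choose (K+1) = M.choose K + M.choose (K+1) :=
    Nat.choose_succ_succ _ _
  have h4 : (M+1).choose (K+2) = M.choose (K+1) + M.choose (K+2) :=
    Nat.choose_succ_succ _ _
  omega

lemma bb_key (n j : ℕ) : bb (n+3) (j+1) + bb (n+1) (j+1) = 2 * bb (n+2) (j+1) + bb (n+2) j := by
  unfold bb
  have e1 : n + 3 + (j+1) = (n+j+1) + 3 := by ring
  have e2 : n + 1 + (j+1) = (n+j+1) + 1 := by ring
  have e3 : n + 2 + (j+1) = (n+j+1) + 2 := by ring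
  have e4 : n + 2 + j = (n+j+1) + 1 := by ring
  have e5 : 2*(j+1) = (2*j) + 2 := by ring
  rw [e1, e2, e3, e4, e5]
  have r1 : n+j+1+3-1 = n+j+1+2 := by omega
  have r2 : n+j+1+1-1 = n+j+1 := by omega
  have r3 : n+j+1+2-1 = n+j+1+1 := by omega
  rw [r1, r2, r3]
  have := pas (n+j+1) (2*j)
  have h2 : (n+j+1+2).choose (2*j+2) = (n+j+1+1).choose (2*j+1) + (n+j+1+1).choose (2*j+2) :=
    Nat.choose_succ_succ _ _
  omega

lemma bb_zero' (n : ℕ) : bb (n+1) 0 = 2 := by simp [bb]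

noncomputable def V (n : ℕ) (x : ℝ) : ℝ :=
  ∑ k ∈ Finset.range (n+1), (-1 : ℝ)^k * (bb n k : ℝ) * x^k

lemma V_ext (n m : ℕ) (h : n + 1 ≤ m) (x : ℝ) :
    V n x = ∑ k ∈ Finset.range m, (-1 : ℝ)^k * (bb n k : ℝ) * x^k := by
  rw [V]
  apply Finset.sum_subset
  · intro a ha; simp only [Finset.mem_range] at *; omega
  · intro a ha hna
    simp only [Finset.mem_range] at *
    rw [bb_zero (by omega)]
    simp

lemma V_rec (n : ℕ) (x : ℝ) : V (n+3) x = (2-x) * V (n+2) x - V (n+1) x := by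
  have h3 : V (n+3) x = ∑ k ∈ Finset.range (n+4), (-1 : ℝ)^k * (bb (n+3) k : ℝ) * x^k := rfl
  have h2 := V_ext (n+2) (n+4) (by omega) x
  have h1 := V_ext (n+1) (n+4) (by omega) x
  have key : (∑ k ∈ Finset.range (n+4),
        ((-1 : ℝ)^k * (bb (n+3) k : ℝ) * x^k + (-1 : ℝ)^k * (bb (n+1) k : ℝ) * x^k
          - 2 * ((-1 : ℝ)^k * (bb (n+2) k : ℝ) * x^k)))
      + (∑ k ∈ Finset.range (n+4), (-1 : ℝ)^k * (bb (n+2) k : ℝ) * x^(k+1)) = 0 := by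
    rw [Finset.sum_range_succ' _ (n+3), Finset.sum_range_succ _ (n+3)]
    have hz : bb (n+2) (n+3) = 0 := bb_zero (by omega)
    have h0 : ((-1 : ℝ)^0 * (bb (n+3) 0 : ℝ) * x^0 + (-1 : ℝ)^0 * (bb (n+1) 0 : ℝ) * x^0
          - 2 * ((-1 : ℝ)^0 * (bb (n+2) 0 : ℝ) * x^0)) = 0 := by
      rw [bb_zero' (n+2), bb_zero' n, bb_zero' (n+1)]; norm_num
    rw [hz, h0]
    push_cast
    rw [add_zero, mul_zero, zero_mul, add_zero, ← Finset.sum_add_distrib]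
    apply Finset.sum_eq_zero
    intro j hj
    have hk := bb_key n j
    have hkR : (bb (n+3) (j+1) : ℝ) + (bb (n+1) (j+1) : ℝ)
        = 2 * (bb (n+2) (j+1) : ℝ) + (bb (n+2) j : ℝ) := by exact_mod_cast hk
    have e : (bb (n+3) (j+1) : ℝ) = 2 * (bb (n+2) (j+1) : ℝ) + (bb (n+2) j : ℝ)
        - (bb (n+1) (j+1) : ℝ) := by linarith
    rw [e]; ring
  rw [h3, h2, h1]
  rw [Finset.mul_sum, ← Finset.sum_sub_distrib]
  -- goal: ∑ f3 = ∑ ((2-x)*f2 - f1)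
  have expand : ∀ k ∈ Finset.range (n+4),
      ((2-x) * ((-1 : ℝ)^k * (bb (n+2) k : ℝ) * x^k) - (-1 : ℝ)^k * (bb (n+1) k : ℝ) * x^k)
      = (2 * ((-1 : ℝ)^k * (bb (n+2) k : ℝ) * x^k) - (-1 : ℝ)^k * (bb (n+1) k : ℝ) * x^k)
        - (-1 : ℝ)^k * (bb (n+2) k : ℝ) * x^(k+1) := by
    intro k _; ring
  rw [Finset.sum_congr rfl expand]
  rw [← Finset.sum_add_distrib] at key
  rw [← sub_eq_zero, ← Finset.sum_sub_distrib, ← key]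
  apply Finset.sum_congr rfl
  intro k _
  ring

noncomputable def T (n : ℕ) (x : ℝ) : ℝ :=
  ∑ k ∈ Finset.range (n+1),
    (-1 : ℝ) ^ (n - k) * ((n : ℝ) / ((n : ℝ) + (k : ℝ))) * (Nat.choose (n + k) (n - k) : ℝ) * x^k

lemma half (N k : ℕ) (hN : 0 < N) (hk : k ≤ N) :
    ((N:ℝ)/((N:ℝ)+(k:ℝ))) * ((N+k).choose (N-k) : ℝ) = (bb N k : ℝ)/2 := by
  have hcs : (N+k).choose (N-k) = (N+k).choose (2*k) := by
    rw [show N - k = (N+k) - 2*k by omega]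
    exact Nat.choose_symm (by omega)
  have hmul : (N+k-1).choose (2*k) * (N+k) = (N+k).choose (2*k) * (N-k) := by
    have h := Nat.choose_mul_succ_eq (N+k-1) (2*k)
    rw [show N+k-1+1 = N+k by omega] at h
    rw [h, show N+k-(2*k) = N-k by omega]
  have h2 : (N+k) * bb N k = 2*N * ((N+k).choose (2*k)) := by
    unfold bb
    zify [hk] at hmul ⊢
    linear_combination hmul
  have hne : ((N:ℝ)+(k:ℝ)) ≠ 0 := by positivity
  rw [hcs]
  rw [div_mul_eq_mul_div, div_eq_div_iff hne (by norm_num)]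
  have : ((N+k : ℕ) : ℝ) * (bb N k : ℝ) = ((2*N : ℕ) : ℝ) * (((N+k).choose (2*k) : ℕ) : ℝ) := by
    exact_mod_cast congrArg (fun z : ℕ => (z : ℝ)) h2
  push_cast at this ⊢
  linarith

lemma neg_one_pow_sub (N k : ℕ) (hk : k ≤ N) : (-1 : ℝ)^(N-k) = (-1)^N * (-1)^k := by
  have h : (-1 : ℝ)^(N-k) * (-1)^k = (-1)^N := by
    rw [← pow_add, Nat.sub_add_cancel hk]
  have hk2 : ((-1 : ℝ)^k) * ((-1 : ℝ)^k) = 1 := by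
    rw [← pow_add, ← two_mul, pow_mul]; norm_num
  calc (-1 : ℝ)^(N-k) = (-1 : ℝ)^(N-k) * (((-1 : ℝ)^k) * ((-1 : ℝ)^k)) := by rw [hk2, mul_one]
    _ = ((-1 : ℝ)^(N-k) * (-1)^k) * (-1)^k := by ring
    _ = (-1)^N * (-1)^k := by rw [h]

lemma T_eq_V (N : ℕ) (hN : 0 < N) (x : ℝ) : T N x = (-1 : ℝ)^N * V N x / 2 := by
  unfold T V
  rw [Finset.mul_sum, Finset.sum_div]
  apply Finset.sum_congr rfl
  intro k hk
  simp only [Finset.mem_range] at hk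
  have hkN : k ≤ N := by omega
  rw [neg_one_pow_sub N k hkN]
  have hh := half N k hN hkN
  calc (-1:ℝ) ^ N * (-1) ^ k * (↑N / (↑N + ↑k)) * ↑((N + k).choose (N - k)) * x ^ k
      = (-1:ℝ) ^ N * (-1) ^ k * ((↑N / (↑N + ↑k)) * ↑((N + k).choose (N - k))) * x ^ k := by ring
    _ = (-1:ℝ) ^ N * (-1) ^ k * ((bb N k : ℝ)/2) * x ^ k := by rw [hh]
    _ = (-1:ℝ) ^ N * ((-1) ^ k * ↑(bb N k) * x ^ k) / 2 := by ring

lemma T_rec (n : ℕ) (x : ℝ) : T (n+3) x = (x-2) * T (n+2) x - T (n+1) x := by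
  rw [T_eq_V _ (by omega), T_eq_V _ (by omega), T_eq_V _ (by omega), V_rec]
  have e3 : (-1:ℝ)^(n+3) = (-1)^(n+1) := by
    rw [show n+3 = (n+1)+2 by ring, pow_add]; norm_num
  have e2 : (-1:ℝ)^(n+2) = -(-1:ℝ)^(n+1) := by
    rw [show n+2 = (n+1)+1 by ring, pow_succ]; ring
  rw [e3, e2]; ring

lemma T_one (x : ℝ) : T 1 x = x/2 - 1 := by
  unfold T
  rw [Finset.sum_range_succ, Finset.sum_range_succ, Finset.sum_range_zero]
  norm_num
  ring

lemma T_two (x : ℝ) : T 2 x = 1 - 2*x + x^2/2 := by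
  unfold T
  rw [Finset.sum_range_succ, Finset.sum_range_succ, Finset.sum_range_succ,
    Finset.sum_range_zero]
  norm_num [Nat.choose]
  ring

noncomputable def P (a b : ℝ) (n : ℕ) : ℝ :=
  if n % 5 = 0 then 1 else if n % 5 = 1 ∨ n % 5 = 4 then -b/2 else -a/2

lemma T_eval (a b : ℝ) (hab : a + b = 1) (hmul : a * b = -1) (n : ℕ) :
    T (n+1) (a^2) = P a b (n+1) := by
  have ha2 : a^2 = a + 1 := by linear_combination a*hab - hmul
  have hb2 : b^2 = b + 1 := by linear_combination b*hab - hmul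
  have hx : a^2 - 2 = -b := by linear_combination ha2 + hab
  suffices H : ∀ m : ℕ, T (m+1) (a^2) = P a b (m+1) ∧ T (m+2) (a^2) = P a b (m+2) by
    exact (H n).1
  intro m
  induction m with
  | zero =>
    constructor
    · rw [T_one]
      show a^2/2 - 1 = if 1 % 5 = 0 then 1 else if 1 % 5 = 1 ∨ 1 % 5 = 4 then -b/2 else -a/2
      norm_num
      linear_combination (1/2)*ha2 + (1/2)*hab
    · rw [T_two]
      show 1 - 2*a^2 + (a^2)^2/2
          = if 2 % 5 = 0 then 1 else if 2 % 5 = 1 ∨ 2 % 5 = 4 then -b/2 else -a/2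
      norm_num
      linear_combination (a^2/2 + a/2 - 1) * ha2
  | succ m ih =>
    refine ⟨ih.2, ?_⟩
    rw [show m+1+2 = m+3 by ring, T_rec, hx, ih.1, ih.2]
    have h5 : (m+1)%5 = 0 ∨ (m+1)%5 = 1 ∨ (m+1)%5 = 2 ∨ (m+1)%5 = 3 ∨ (m+1)%5 = 4 := by omega
    unfold P
    rcases h5 with h|h|h|h|h
    · rw [h, show (m+2)%5 = 1 by omega, show (m+3)%5 = 2 by omega]
      norm_num
      linear_combination (1/2)*hb2 + (1/2)*hab
    · rw [h, show (m+2)%5 = 2 by omega, show (m+3)%5 = 3 by omega]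
      norm_num
      linear_combination (1/2)*hmul + (1/2)*hab
    · rw [h, show (m+2)%5 = 3 by omega, show (m+3)%5 = 4 by omega]
      norm_num
      linear_combination (1/2)*hmul + (1/2)*hab
    · rw [h, show (m+2)%5 = 4 by omega, show (m+3)%5 = 0 by omega]
      norm_num
      linear_combination (1/2)*hb2 + (1/2)*hab
    · rw [h, show (m+2)%5 = 0 by omega, show (m+3)%5 = 1 by omega]
      norm_num
      ring


lemma gold_eq : gold = goldenRatio := rfl
lemma gold'_eq : gold' = goldenConj := rfl

lemma gold_ne : gold ≠ 0 := goldenRatio_ne_zero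
lemma gold'_ne : gold' ≠ 0 := goldenConj_ne_zero


lemma binetZ (m : ℤ) : (fibZ m : ℝ) = (gold ^ m - gold' ^ m) / Real.sqrt 5 := by
  unfold fibZ
  rw [gold_eq, gold'_eq]
  split_ifs with h
  · obtain ⟨j, rfl⟩ : ∃ j : ℕ, m = (j : ℤ) := ⟨m.toNat, (Int.toNat_of_nonneg h).symm⟩
    rw [zpow_natCast, zpow_natCast, Int.toNat_natCast]
    push_cast
    exact Real.coe_fib_eq j
  · push_neg at h
    obtain ⟨j, rfl⟩ : ∃ j : ℕ, m = -(j : ℤ) := by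
      refine ⟨(-m).toNat, ?_⟩
      omega
    have hj : ((-(-(j:ℤ))).toNat) = j := by omega
    rw [hj]
    rw [zpow_neg, zpow_neg, zpow_natCast, zpow_natCast]
    rw [← inv_pow, ← inv_pow, inv_goldenRatio, inv_goldenConj]
    have hfib := Real.coe_fib_eq j
    have e1 : ((-goldenConj : ℝ))^j = (-1)^j * goldenConj^j := by
      rw [← neg_one_mul, mul_pow]
    have e2 : ((-goldenRatio : ℝ))^j = (-1)^j * goldenRatio^j := by
      rw [← neg_one_mul, mul_pow]
    push_cast
    rw [e1, e2, hfib, pow_succ]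
    ring

lemma fib_decomp (k : ℕ) (t : ℤ) :
    (fibZ (2 * k + t) : ℝ)
      = ((gold^2)^k * gold ^ t - (gold'^2)^k * gold' ^ t) / Real.sqrt 5 := by
  rw [binetZ]
  have h1 : gold ^ (2 * (k:ℤ) + t) = (gold^2)^k * gold ^ t := by
    rw [zpow_add₀ gold_ne]
    congr 1
    rw [show (2 * (k:ℤ)) = ((2*k : ℕ) : ℤ) by push_cast; ring, zpow_natCast, pow_mul]
  have h2 : gold' ^ (2 * (k:ℤ) + t) = (gold'^2)^k * gold' ^ t := by
    rw [zpow_add₀ gold'_ne]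
    congr 1
    rw [show (2 * (k:ℤ)) = ((2*k : ℕ) : ℤ) by push_cast; ring, zpow_natCast, pow_mul]
  rw [h1, h2]

lemma main_sum (n : ℕ) (hn : 0 < n) (t : ℤ) :
    ∑ k ∈ Finset.range (n + 1),
        (-1 : ℝ) ^ (n - k) * ((n : ℝ) / ((n : ℝ) + (k : ℝ))) * (Nat.choose (n + k) (n - k) : ℝ) *
          (fibZ (2 * k + t) : ℝ)
      = (gold ^ t * T n (gold^2) - gold' ^ t * T n (gold'^2)) / Real.sqrt 5 := by
  unfold T
  rw [Finset.mul_sum, Finset.mul_sum, ← Finset.sum_sub_distrib, Finset.sum_div]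
  apply Finset.sum_congr rfl
  intro k _
  rw [fib_decomp]
  ring

theorem stmt14 (n : ℕ) (hn : 0 < n) (t : ℤ) :
    ∑ k ∈ Finset.range (n + 1),
        (-1 : ℝ) ^ (n - k) * ((n : ℝ) / ((n : ℝ) + (k : ℝ))) * (Nat.choose (n + k) (n - k) : ℝ) *
          (fibZ (2 * k + t) : ℝ) =
      if n % 5 = 0 then (fibZ t : ℝ)
      else if n % 5 = 1 ∨ n % 5 = 4 then (fibZ (t - 1) : ℝ) / 2
      else -(fibZ (t + 1) : ℝ) / 2 := by
  rw [main_sum n hn t]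
  obtain ⟨m, rfl⟩ : ∃ m, n = m + 1 := ⟨n-1, by omega⟩
  have hadd : gold + gold' = 1 := goldenRatio_add_goldenConj
  have hmul : gold * gold' = -1 := goldenRatio_mul_goldenConj
  have hadd' : gold' + gold = 1 := by linarith
  have hmul' : gold' * gold = -1 := by linarith [hmul]
  have ginv : gold⁻¹ = -gold' := inv_goldenRatio
  have ginv' : gold'⁻¹ = -gold := inv_goldenConj
  rw [T_eval gold gold' hadd hmul m, T_eval gold' gold hadd' hmul' m]
  unfold P
  have h5 : (m+1)%5 = 0 ∨ (m+1)%5 = 1 ∨ (m+1)%5 = 2 ∨ (m+1)%5 = 3 ∨ (m+1)%5 = 4 := by omega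
  rcases h5 with h|h|h|h|h
  · rw [h]
    norm_num
    rw [binetZ t]
  · rw [h]; norm_num
    rw [binetZ (t-1), zpow_sub_one₀ gold_ne t, zpow_sub_one₀ gold'_ne t, ginv, ginv']
    ring
  · rw [h]; norm_num
    rw [binetZ (t+1), zpow_add_one₀ gold_ne t, zpow_add_one₀ gold'_ne t]
    ring
  · rw [h]; norm_num
    rw [binetZ (t+1), zpow_add_one₀ gold_ne t, zpow_add_one₀ gold'_ne t]
    ring
  · rw [h]; norm_num
    rw [binetZ (t-1), zpow_sub_one₀ gold_ne t, zpow_sub_one₀ gold'_ne t, ginv, ginv']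
    ring
end
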